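/- Let F : ℝ × (0,∞)² → ℝ be C¹ with |∂F/∂x (x,y,z)| ≤ C·|x|^{p−1} for some p ≥ 1 and all |x| ≤ ε, y,z in a fixed compact subset of (0,∞). Fix m ≥ 2/ε. Then there is a constant K such that for all u ∈ (0, 1/m), all y, z in the compact set, and all x, x' ∈ ℝ with |x| ≤ 1/m and |x'| ≤ u/2, and with F(0,y,z) = 0: | F(x+x', y, z)·1_{|x+x'| > u} − F(x,y,z)·1_{|x| > u} | ≤ K·( |x|^{p−1}·|x'| + (|x| ∧ u)^p ). -/

import Mathlib

private lemma rpow_split {p : ℝ} (hp : 1 ≤ p) {r : ℝ} (hr : 0 ≤ r) :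
    r ^ (p - 1) * r = r ^ p := by
  have h : r ^ p = r ^ (p - 1 + 1) := by ring_nf
  rw [h, Real.rpow_add' hr (by linarith), Real.rpow_one]

private lemma mvt_key (f : ℝ → ℝ) (C p ε : ℝ) (hC : 0 ≤ C) (hp : 1 ≤ p)
    (hf : ContDiff ℝ 1 f)
    (hd : ∀ x : ℝ, |x| ≤ ε → |deriv f x| ≤ C * |x| ^ (p - 1))
    (a b : ℝ) (ha : |a| ≤ ε) (hb : |b| ≤ ε) :
    |f b - f a| ≤ C * max |a| |b| ^ (p - 1) * |b - a| := by
  set M := max |a| |b| with hM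
  have hM0 : 0 ≤ M := le_trans (abs_nonneg a) (le_max_left _ _)
  have hMε : M ≤ ε := max_le ha hb
  have hconv : Convex ℝ (Set.Icc (-M) M) := convex_Icc _ _
  have hdiff' : ∀ t ∈ Set.Icc (-M) M, DifferentiableAt ℝ f t := fun t _ =>
    hf.differentiable one_ne_zero t
  have hbound : ∀ t ∈ Set.Icc (-M) M, ‖deriv f t‖ ≤ C * M ^ (p - 1) := by
    intro t ht
    have htabs : |t| ≤ M := abs_le.2 ⟨ht.1, ht.2⟩
    rw [Real.norm_eq_abs]
    calc |deriv f t| ≤ C * |t| ^ (p - 1) := hd t (htabs.trans hMε)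
      _ ≤ C * M ^ (p - 1) :=
        mul_le_mul_of_nonneg_left (Real.rpow_le_rpow (abs_nonneg t) htabs (by linarith)) hC
  have hmem_a : a ∈ Set.Icc (-M) M := by
    have := abs_le.1 (le_max_left |a| |b|); exact ⟨this.1, this.2⟩
  have hmem_b : b ∈ Set.Icc (-M) M := by
    have := abs_le.1 (le_max_right |a| |b|); exact ⟨this.1, this.2⟩
  have := Convex.norm_image_sub_le_of_norm_deriv_le hdiff' hbound hconv hmem_a hmem_b
  simpa [Real.norm_eq_abs] using this

theorem stmt_9 (F : ℝ → ℝ → ℝ → ℝ) (S : Set ℝ) (hS : IsCompact S) (hSpos : S ⊆ Set.Ioi 0)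
    (C ε p m : ℝ) (hC : 0 < C) (hε : 0 < ε) (hp : 1 ≤ p) (hm : 2 / ε ≤ m) (hm0 : 0 < m)
    (hdiff : ∀ y ∈ S, ∀ z ∈ S, ContDiff ℝ 1 (fun x => F x y z))
    (hderiv : ∀ y ∈ S, ∀ z ∈ S, ∀ x : ℝ, |x| ≤ ε →
      |deriv (fun t => F t y z) x| ≤ C * |x| ^ (p - 1))
    (hF0 : ∀ y ∈ S, ∀ z ∈ S, F 0 y z = 0) :
    ∃ K : ℝ, 0 < K ∧ ∀ u : ℝ, 0 < u → u < 1 / m → ∀ y ∈ S, ∀ z ∈ S, ∀ x x' : ℝ,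
      |x| ≤ 1 / m → |x'| ≤ u / 2 →
      |(if u < |x + x'| then F (x + x') y z else 0) - (if u < |x| then F x y z else 0)| ≤
        K * (|x| ^ (p - 1) * |x'| + (min |x| u) ^ p) := by
  have h2p : (0:ℝ) < (2:ℝ) ^ p := Real.rpow_pos_of_pos two_pos p
  refine ⟨C * 2 ^ p, mul_pos hC h2p, ?_⟩
  intro u hu hum y hy z hz x x' hx hx'
  have hεm : 1 / m ≤ ε / 2 := by
    rw [div_le_div_iff₀ hm0 two_pos]
    have := (div_le_iff₀ hε).1 hm
    linarith
  have hxε : |x| ≤ ε := hx.trans (by linarith)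
  have huε : u ≤ ε / 2 := (le_of_lt hum).trans hεm
  have hxx'ε : |x + x'| ≤ ε := by
    have := abs_add_le x x'
    have h1 : |x| ≤ ε / 2 := hx.trans hεm
    linarith
  -- basic nonnegativity facts
  have ht1 : 0 ≤ |x| ^ (p - 1) * |x'| :=
    mul_nonneg (Real.rpow_nonneg (abs_nonneg x) _) (abs_nonneg x')
  have ht2 : 0 ≤ (min |x| u) ^ p :=
    Real.rpow_nonneg (le_min (abs_nonneg x) hu.le) _
  have hFbound : ∀ a : ℝ, |a| ≤ ε → |F a y z| ≤ C * |a| ^ (p - 1) * |a| := by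
    intro a haε
    have h := mvt_key (fun t => F t y z) C p ε hC.le hp (hdiff y hy z hz)
      (hderiv y hy z hz) 0 a (by simpa using hε.le) haε
    simpa [hF0 y hy z hz, abs_nonneg] using h
  by_cases h1 : u < |x + x'| <;> by_cases h2 : u < |x|
  · -- both indicators on
    rw [if_pos h1, if_pos h2]
    have hxx2 : |x + x'| ≤ 2 * |x| := by
      have := abs_add_le x x'
      linarith
    have hmax : max |x| |x + x'| ≤ 2 * |x| := max_le (by linarith [abs_nonneg x]) hxx2
    have h := mvt_key (fun t => F t y z) C p ε hC.le hp (hdiff y hy z hz)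
      (hderiv y hy z hz) x (x + x') hxε hxx'ε
    have hsub : |(x + x') - x| = |x'| := by ring_nf
    rw [hsub] at h
    have hmax0 : 0 ≤ max |x| |x + x'| := le_trans (abs_nonneg x) (le_max_left _ _)
    have hstep : max |x| |x + x'| ^ (p - 1) ≤ 2 ^ p * |x| ^ (p - 1) := by
      calc max |x| |x + x'| ^ (p - 1) ≤ (2 * |x|) ^ (p - 1) :=
            Real.rpow_le_rpow hmax0 hmax (by linarith)
        _ = 2 ^ (p - 1) * |x| ^ (p - 1) := Real.mul_rpow (by norm_num) (abs_nonneg x)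
        _ ≤ 2 ^ p * |x| ^ (p - 1) := by
            apply mul_le_mul_of_nonneg_right _ (Real.rpow_nonneg (abs_nonneg x) _)
            exact Real.rpow_le_rpow_of_exponent_le (by norm_num) (by linarith)
    calc |F (x + x') y z - F x y z| ≤ C * max |x| |x + x'| ^ (p - 1) * |x'| := h
      _ ≤ C * (2 ^ p * |x| ^ (p - 1)) * |x'| := by
          apply mul_le_mul_of_nonneg_right _ (abs_nonneg x')
          exact mul_le_mul_of_nonneg_left hstep hC.le
      _ = C * 2 ^ p * (|x| ^ (p - 1) * |x'|) := by ring
      _ ≤ C * 2 ^ p * (|x| ^ (p - 1) * |x'| + (min |x| u) ^ p) := by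
          apply mul_le_mul_of_nonneg_left _ (mul_pos hC h2p).le
          linarith
  · -- indicator on x+x' only
    rw [if_pos h1, if_neg h2]
    push_neg at h2
    have hmin : min |x| u = |x| := min_eq_left h2
    have hhalf : u / 2 < |x| := by
      have := abs_add_le x x'
      have : u < |x| + u / 2 := lt_of_lt_of_le h1 (by linarith)
      linarith
    have hxx2 : |x + x'| ≤ 2 * |x| := by
      have := abs_add_le x x'
      linarith
    have h := hFbound (x + x') hxx'ε
    have hxx0 : (0:ℝ) ≤ |x + x'| := abs_nonneg _
    have hb : C * |x + x'| ^ (p - 1) * |x + x'| ≤ C * (2 * |x|) ^ (p - 1) * (2 * |x|) := by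
      apply mul_le_mul (mul_le_mul_of_nonneg_left
        (Real.rpow_le_rpow hxx0 hxx2 (by linarith)) hC.le) hxx2 hxx0
      exact mul_nonneg hC.le (Real.rpow_nonneg (by linarith [abs_nonneg x]) _)
    have hx0 : (0:ℝ) ≤ 2 * |x| := by linarith [abs_nonneg x]
    have hsplit : (2 * |x|) ^ (p - 1) * (2 * |x|) = 2 ^ p * |x| ^ p := by
      rw [rpow_split hp hx0, Real.mul_rpow (by norm_num) (abs_nonneg x)]
    calc |F (x + x') y z - 0| = |F (x + x') y z| := by rw [sub_zero]
      _ ≤ C * (2 * |x|) ^ (p - 1) * (2 * |x|) := h.trans hb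
      _ = C * 2 ^ p * |x| ^ p := by rw [mul_assoc, hsplit]; ring
      _ ≤ C * 2 ^ p * (|x| ^ (p - 1) * |x'| + (min |x| u) ^ p) := by
          apply mul_le_mul_of_nonneg_left _ (mul_pos hC h2p).le
          rw [hmin]; linarith
  · -- indicator on x only
    rw [if_neg h1, if_pos h2]
    push_neg at h1
    have hmin : min |x| u = u := min_eq_right h2.le
    have hx2u : |x| ≤ 2 * u := by
      have h3 : |x| ≤ |x + x'| + |x'| := by
        have := abs_add_le (x + x') (-x')
        simpa using this
      linarith
    have h := hFbound x hxε
    have hb : C * |x| ^ (p - 1) * |x| ≤ C * (2 * u) ^ (p - 1) * (2 * u) := by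
      apply mul_le_mul (mul_le_mul_of_nonneg_left
        (Real.rpow_le_rpow (abs_nonneg x) hx2u (by linarith)) hC.le) hx2u (abs_nonneg x)
      exact mul_nonneg hC.le (Real.rpow_nonneg (by linarith) _)
    have hsplit : (2 * u) ^ (p - 1) * (2 * u) = 2 ^ p * u ^ p := by
      rw [rpow_split hp (by linarith : (0:ℝ) ≤ 2 * u), Real.mul_rpow (by norm_num) hu.le]
    calc |0 - F x y z| = |F x y z| := by rw [zero_sub, abs_neg]
      _ ≤ C * (2 * u) ^ (p - 1) * (2 * u) := h.trans hb
      _ = C * 2 ^ p * u ^ p := by rw [mul_assoc, hsplit]; ring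
      _ ≤ C * 2 ^ p * (|x| ^ (p - 1) * |x'| + (min |x| u) ^ p) := by
          apply mul_le_mul_of_nonneg_left _ (mul_pos hC h2p).le
          rw [hmin]; linarith
  · rw [if_neg h1, if_neg h2]
    simp only [sub_zero, abs_zero]
    exact mul_nonneg (mul_pos hC h2p).le (by linarith)
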